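/- arXiv:math/0404370 — 5 statements merged into one kernel-verified Lean document; each statement's English description precedes it below -/
import Mathlib

section
/- Let M be a matroid on a finite ground set E and let ω ∈ ℝ^E. Then ω lies in the Bergman fan B̃(M) (i.e., every element of E lies in some ω-minimum basis) if and only if no circuit of M has a unique ω-maximum element. -/
open scoped Classical

variable {α : Type*}

/-- The ω-weight of a set of elements: the sum of ω over the set. -/
noncomputable def wSum (ω : α → ℝ) (B : Set α) : ℝ := ∑ᶠ e ∈ B, ω e

/-- `B` is an ω-minimum basis of `M`: a basis whose ω-weight is minimum among all bases. -/
def IsMinBase [Fintype α] (M : Matroid α) (ω : α → ℝ) (B : Set α) : Prop :=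
  M.IsBase B ∧ ∀ B' : Set α, M.IsBase B' → wSum ω B ≤ wSum ω B'

/-- `ω` lies in the Bergman fan of `M`: every element lies in some ω-minimum basis. -/
def InBergmanFan [Fintype α] (M : Matroid α) (ω : α → ℝ) : Prop :=
  ∀ e : α, ∃ B : Set α, IsMinBase M ω B ∧ e ∈ B

/-- `C` is a circuit of `M`: a minimal dependent set. -/
def IsCircuit (M : Matroid α) (C : Set α) : Prop := Minimal M.Dep C

/-- A cocircuit of `M` is a circuit of the dual matroid `M✶`. -/
def IsCocircuit (M : Matroid α) (C : Set α) : Prop := IsCircuit M✶ C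

lemma wSum_eq_sum [Fintype α] (ω : α → ℝ) (S : Set α) :
    wSum ω S = ∑ x ∈ S.toFinset, ω x := by
  rw [wSum, ← finsum_mem_coe_finset, Set.coe_toFinset]

lemma wSum_insert_diff [Fintype α] (ω : α → ℝ) {S : Set α} {a b : α}
    (ha : a ∉ S) (hb : b ∈ S) :
    wSum ω (insert a (S \ {b})) = wSum ω S + ω a - ω b := by
  have h1 : wSum ω (insert a (S \ {b})) = ω a + wSum ω (S \ {b}) :=
    finsum_mem_insert ω (fun h => ha h.1) (Set.toFinite _)
  have h2 : wSum ω S = ω b + wSum ω (S \ {b}) := by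
    conv_lhs => rw [show S = insert b (S \ {b}) by
      rw [Set.insert_diff_singleton, Set.insert_eq_of_mem hb]]
    exact finsum_mem_insert ω (fun h => h.2 rfl) (Set.toFinite _)
  rw [h1, h2]; ring

lemma IsCircuit.diff_indep {M : Matroid α} {C : Set α} (hC : IsCircuit M C)
    {e : α} (he : e ∈ C) : M.Indep (C \ {e}) := by
  by_contra h
  have hdep : M.Dep (C \ {e}) :=
    ⟨h, Set.diff_subset.trans hC.prop.subset_ground⟩
  exact (hC.2 hdep Set.diff_subset he).2 rfl

lemma IsCircuit.mem_closure_diff {M : Matroid α} {C : Set α} (hC : IsCircuit M C)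
    {e : α} (he : e ∈ C) : e ∈ M.closure (C \ {e}) := by
  have hi := hC.diff_indep he
  have hdep : M.Dep (insert e (C \ {e})) := by
    rw [Set.insert_diff_singleton, Set.insert_eq_of_mem he]
    exact hC.prop
  exact (hi.insert_dep_iff.mp hdep).1

/-- ω lies in the Bergman fan of M iff no circuit of M has a
unique ω-maximum element. -/
theorem stmt0 [Fintype α] (M : Matroid α) (hE : M.E = Set.univ) (ω : α → ℝ) :
    InBergmanFan M ω ↔
      ¬ ∃ C : Set α, IsCircuit M C ∧ ∃ e ∈ C, ∀ f ∈ C \ {e}, ω f < ω e := by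
  constructor
  · rintro hBF ⟨C, hC, e, heC, hmax⟩
    obtain ⟨B, ⟨hBbase, hBmin⟩, heB⟩ := hBF e
    have hecl : e ∈ M.closure (C \ {e}) := hC.mem_closure_diff heC
    have hnot : ¬ (C \ {e} ⊆ M.closure (B \ {e})) := by
      intro hsub
      exact hBbase.indep.notMem_closure_diff_of_mem heB
        (Matroid.closure_subset_closure_of_subset_closure hsub hecl)
    obtain ⟨f, hfC, hfcl⟩ := Set.not_subset.mp hnot
    have hfe : f ≠ e := hfC.2
    have hfB : f ∉ B := by
      intro h
      exact hfcl (M.subset_closure (B \ {e})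
        ((Set.diff_subset).trans hBbase.subset_ground) ⟨h, hfe⟩)
    have hind : M.Indep (insert f (B \ {e})) := by
      rw [(hBbase.indep.subset Set.diff_subset).insert_indep_iff_of_notMem
        (fun h => hfB h.1)]
      exact ⟨by rw [hE]; trivial, hfcl⟩
    have hbase' : M.IsBase (insert f B \ {e}) :=
      hBbase.exchange_isBase_of_indep' heB hfB
        (by rwa [← Set.insert_diff_singleton_comm hfe])
    have hw : wSum ω (insert f (B \ {e})) = wSum ω B + ω f - ω e :=
      wSum_insert_diff ω hfB heB
    have hlt := hmax f hfC
    have := hBmin _ hbase'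
    rw [← Set.insert_diff_singleton_comm hfe, hw] at this
    linarith
  · intro hnc e
    obtain ⟨B0, hB0⟩ := M.exists_isBase
    obtain ⟨B, hBbase, hBmin⟩ :=
      Set.exists_min_image {B | M.IsBase B} (wSum ω) (Set.toFinite _) ⟨B0, hB0⟩
    simp only [Set.mem_setOf_eq] at hBbase hBmin
    by_cases heB : e ∈ B
    · exact ⟨B, ⟨hBbase, hBmin⟩, heB⟩
    have heE : e ∈ M.E := by rw [hE]; trivial
    have hdep : M.Dep (insert e B) := hBbase.insert_dep ⟨heE, heB⟩
    obtain ⟨C, hCs, hCmin⟩ :=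
      show ∃ C ∈ {X | M.Dep X ∧ X ⊆ insert e B}, ∀ D ∈ {X | M.Dep X ∧ X ⊆ insert e B},
          id D ≤ id C → id C = id D from by
        obtain ⟨C, hC1, hC2⟩ := Set.Finite.exists_minimal
          (Set.toFinite {X | M.Dep X ∧ X ⊆ insert e B}) ⟨insert e B, hdep, subset_rfl⟩
        exact ⟨C, hC1, fun D hD h => le_antisymm (hC2 hD h) h⟩
    simp only [Set.mem_setOf_eq, id] at hCs hCmin
    have hCcirc : IsCircuit M C := by
      refine ⟨hCs.1, fun D hD hDC => ?_⟩
      rw [hCmin D ⟨hD, hDC.trans hCs.2⟩ hDC]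
    have heC : e ∈ C := by
      by_contra h
      have hsub : C ⊆ B := fun x hx =>
        ((hCs.2 hx).resolve_left (by rintro rfl; exact h hx))
      exact hCs.1.1 (hBbase.indep.subset hsub)
    have hne : ¬ ∀ f ∈ C \ {e}, ω f < ω e := fun h => hnc ⟨C, hCcirc, e, heC, h⟩
    push_neg at hne
    obtain ⟨f, hfC, hfe⟩ := hne
    have hfne : f ≠ e := hfC.2
    have hfB : f ∈ B := (hCs.2 hfC.1).resolve_left hfne
    have hecl : e ∉ M.closure (B \ {f}) := by
      intro hcl
      have hfcl : f ∈ M.closure (C \ {f}) := hCcirc.mem_closure_diff hfC.1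
      have hsub : C \ {f} ⊆ insert e (B \ {f}) := by
        rintro x ⟨hx, hxf⟩
        rcases hCs.2 hx with rfl | hxB
        · exact Set.mem_insert _ _
        · exact Set.mem_insert_of_mem _ ⟨hxB, hxf⟩
      have h2 : M.closure (C \ {f}) ⊆ M.closure (insert e (B \ {f})) :=
        M.closure_subset_closure hsub
      rw [Matroid.closure_insert_eq_of_mem_closure hcl] at h2
      exact hBbase.indep.notMem_closure_diff_of_mem hfB (h2 hfcl)
    have hind : M.Indep (insert e (B \ {f})) := by
      rw [(hBbase.indep.subset Set.diff_subset).insert_indep_iff_of_notMem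
        (fun h => heB h.1)]
      exact ⟨heE, hecl⟩
    have hbase' : M.IsBase (insert e (B \ {f})) := by
      rw [Set.insert_diff_singleton_comm (Ne.symm hfne)]
      exact hBbase.exchange_isBase_of_indep' hfB heB
        (by rwa [← Set.insert_diff_singleton_comm (Ne.symm hfne)])
    have hw : wSum ω (insert e (B \ {f})) = wSum ω B + ω e - ω f :=
      wSum_insert_diff ω heB hfB
    refine ⟨insert e (B \ {f}), ⟨hbase', fun B' hB' => ?_⟩, Set.mem_insert _ _⟩
    have := hBmin B' hB'
    rw [hw]
    linarith
end

section
/- Let M be a matroid on a finite ground set E and let ω ∈ ℝ^E. Then ω lies in the Bergman fan B̃(M) (i.e., every element of E lies in some ω-minimum basis) if and only if every element of E is ω-minimum in some cocircuit of M. -/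
open scoped Classical

variable {α : Type*}

lemma wSum_exchange [Fintype α] (ω : α → ℝ) {B : Set α} {e f : α}
    (he : e ∉ B) (hf : f ∈ B) :
    wSum ω (insert e (B \ {f})) = wSum ω B - ω f + ω e := by
  have h1 : wSum ω (insert e (B \ {f})) = ω e + wSum ω (B \ {f}) := by
    simp only [wSum]
    exact finsum_mem_insert ω (fun h => he h.1) (Set.toFinite _)
  have hBeq : insert f (B \ {f}) = B := by
    rw [Set.insert_diff_singleton, Set.insert_eq_of_mem hf]
  have h2 : wSum ω B = ω f + wSum ω (B \ {f}) := by
    simp only [wSum]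
    conv_lhs => rw [← hBeq]
    exact finsum_mem_insert ω (fun h => h.2 rfl) (Set.toFinite _)
  rw [h1, h2]; ring

lemma exists_minBase [Fintype α] (M : Matroid α) (ω : α → ℝ) :
    ∃ B, IsMinBase M ω B := by
  obtain ⟨B₀, hB₀⟩ := M.exists_isBase
  obtain ⟨B, hB, hmin⟩ :=
    Set.exists_min_image {B : Set α | M.IsBase B} (wSum ω) (Set.toFinite _) ⟨B₀, hB₀⟩
  exact ⟨B, hB, fun B' hB' => hmin B' hB'⟩

/-- ω lies in the Bergman fan of M iff every element of the ground set
is ω-minimum in some cocircuit of M. -/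
theorem stmt1 [Fintype α] (M : Matroid α) (hE : M.E = Set.univ) (ω : α → ℝ) :
    InBergmanFan M ω ↔
      ∀ e : α, ∃ C : Set α, IsCocircuit M C ∧ e ∈ C ∧ ∀ f ∈ C, ω e ≤ ω f := by
  constructor
  · intro h e
    obtain ⟨B, ⟨hB, hmin⟩, heB⟩ := h e
    set H := M.closure (B \ {e}) with hHdef
    have heH : e ∉ H := hB.indep.notMem_closure_sdiff_of_mem heB
    have hBd : M.Indep (B \ {e}) := hB.indep.subset Set.diff_subset
    have hsubH : B \ {e} ⊆ H := M.subset_closure _ (by rw [hE]; exact Set.subset_univ _)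
    -- the exchange bases
    have key : ∀ x ∈ Set.univ \ H, M.IsBase (insert x (B \ {e})) := by
      intro x hx
      by_cases hxe : x = e
      · subst hxe
        rwa [Set.insert_diff_singleton, Set.insert_eq_of_mem heB]
      · have hxB : x ∉ B := fun hxB => hx.2 (hsubH ⟨hxB, hxe⟩)
        have hind : M.Indep (insert x (B \ {e})) :=
          ((hBd.notMem_closure_iff (by rw [hE]; trivial)).mp hx.2).1
        exact hB.exchange_isBase_of_indep hxB hind
    refine ⟨Set.univ \ H, ⟨?_, ?_⟩, ⟨trivial, heH⟩, ?_⟩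
    · -- dependent in the dual
      refine ⟨fun hind => ?_, by simp [hE]⟩
      obtain ⟨-, B', hB', hdisj⟩ := Matroid.dual_indep_iff_exists'.mp hind
      have hB'H : B' ⊆ H := fun b hb => by
        by_contra hbH
        exact hdisj.ne_of_mem ⟨trivial, hbH⟩ hb rfl
      have : M.E ⊆ H := by
        rw [← hB'.closure_eq]
        calc M.closure B' ⊆ M.closure H := M.closure_subset_closure hB'H
          _ = H := M.closure_closure _
      exact heH (this (by rw [hE]; trivial))
    · -- minimality
      intro D hD hDC
      by_contra hCD
      obtain ⟨x, hxC, hxD⟩ := Set.not_subset.mp hCD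
      have hBx := key x hxC
      have hdisj : Disjoint D (insert x (B \ {e})) := by
        refine Set.disjoint_left.mpr fun b hbD hb => ?_
        rcases hb with rfl | hb
        · exact hxD hbD
        · exact (hDC hbD).2 (hsubH hb)
      exact hD.1 (Matroid.dual_indep_iff_exists'.mpr
        ⟨by simp [hE], insert x (B \ {e}), hBx, hdisj⟩)
    · -- weight minimality
      intro f hf
      by_cases hfe : f = e
      · subst hfe; exact le_refl _
      · have hfB : f ∉ B := fun hfB => hf.2 (hsubH ⟨hfB, hfe⟩)
        have hBf := key f hf
        have := hmin _ hBf
        rw [wSum_exchange ω hfB heB] at this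
        linarith
  · intro h e
    obtain ⟨B, hB, hmin⟩ := exists_minBase M ω
    obtain ⟨C, hC, heC, hmw⟩ := h e
    by_cases heB : e ∈ B
    · exact ⟨B, ⟨hB, hmin⟩, heB⟩
    -- e is not in the min basis; do an exchange
    have hclC : ∀ x ∈ C, x ∉ M.closure (Set.univ \ C) := by
      intro x hxC hxcl
      have hndep : ¬ M✶.Dep (C \ {x}) := by
        intro hdep
        exact (hC.2 hdep Set.diff_subset hxC).2 rfl
      have hcoind : M✶.Indep (C \ {x}) :=
        (Matroid.not_dep_iff (by simp [hE])).mp hndep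
      obtain ⟨-, B₁, hB₁, hdisj⟩ := Matroid.dual_indep_iff_exists'.mp hcoind
      have hB₁sub : B₁ ⊆ insert x (Set.univ \ C) := by
        intro b hb
        by_cases hbC : b ∈ C
        · by_cases hbx : b = x
          · exact hbx ▸ Set.mem_insert _ _
          · exact absurd rfl (hdisj.ne_of_mem ⟨hbC, hbx⟩ hb)
        · exact Set.mem_insert_of_mem _ ⟨trivial, hbC⟩
      have hspan : M.closure (Set.univ \ C) = M.E := by
        apply subset_antisymm (M.closure_subset_ground _)
        rw [← hB₁.closure_eq]
        calc M.closure B₁ ⊆ M.closure (insert x (Set.univ \ C)) :=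
              M.closure_subset_closure hB₁sub
          _ = M.closure (Set.univ \ C) := Matroid.closure_insert_eq_of_mem_closure hxcl
      have hsp : M.Spanning (Set.univ \ C) := by
        rw [Matroid.spanning_iff_closure_eq (by rw [hE]; exact Set.subset_univ _)]
        exact hspan
      obtain ⟨B₂, hB₂, hB₂sub⟩ := hsp.exists_isBase_subset
      refine hC.1.1 (Matroid.dual_indep_iff_exists'.mpr
        ⟨by simp [hE], B₂, hB₂, ?_⟩)
      exact Set.disjoint_left.mpr fun c hcC hcB₂ => (hB₂sub hcB₂).2 hcC
    -- e is not in the closure of B \ C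
    have heBC : e ∉ M.closure (B \ C) := fun hmem =>
      hclC e heC (M.closure_subset_closure
        (Set.diff_subset_diff_left (Set.subset_univ _)) hmem)
    have hBCi : M.Indep (B \ C) := hB.indep.subset Set.diff_subset
    have hJ : M.Indep (insert e (B \ C)) :=
      ((hBCi.notMem_closure_iff (by rw [hE]; trivial)).mp heBC).1
    obtain ⟨B', hB', hJB', hB'sub⟩ := hJ.exists_isBase_subset_union_isBase hB
    have heB' : e ∈ B' := hJB' (Set.mem_insert _ _)
    have hB'insert : B' ⊆ insert e B := by
      refine hB'sub.trans ?_
      rw [Set.insert_union]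
      exact Set.insert_subset_insert (Set.union_subset Set.diff_subset le_rfl)
    -- find the element f exchanged out
    have hBB' : (B \ B').Nonempty := by
      rw [Set.nonempty_iff_ne_empty]
      intro hemp
      have hsub : B ⊆ B' := by rwa [Set.diff_eq_empty] at hemp
      exact heB (hB.eq_of_subset_isBase hB' hsub ▸ heB')
    obtain ⟨f, hfB, hfB'⟩ := hBB'
    have hfe : f ≠ e := fun h => heB (h ▸ hfB)
    have hB'eq : B' = insert e (B \ {f}) := by
      have hsub : B' ⊆ insert e (B \ {f}) := by
        intro b hb
        rcases hB'insert hb with h | h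
        · exact h ▸ Set.mem_insert _ _
        · exact Set.mem_insert_of_mem _ ⟨h, fun hbf => hfB' (hbf ▸ hb)⟩
      refine Set.eq_of_subset_of_ncard_le hsub ?_ (Set.toFinite _)
      have h1 : (insert e (B \ {f})).ncard = (B \ {f}).ncard + 1 :=
        Set.ncard_insert_of_notMem (fun h => heB h.1) (Set.toFinite _)
      have h2 : (B \ {f}).ncard + 1 = B.ncard :=
        Set.ncard_diff_singleton_add_one hfB (Set.toFinite _)
      rw [h1, h2, hB'.ncard_eq_ncard_of_isBase hB]
    have hfC : f ∈ C := by
      by_contra hfC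
      exact hfB' (hJB' (Set.mem_insert_of_mem _ ⟨hfB, hfC⟩))
    have hwle : wSum ω B' ≤ wSum ω B := by
      rw [hB'eq, wSum_exchange ω heB hfB]
      have := hmw f hfC
      linarith
    exact ⟨B', ⟨hB', fun B'' hB'' => hwle.trans (hmin B'' hB'')⟩, heB'⟩
end

section
/- Let M be a loopless matroid on a finite ground set E and let ω ∈ ℝ^E. Then for every e ∈ E, the subdominant M-ultrametric satisfies ω^M_e = min of the finite set {ω_e} ∪ { max_{f ∈ C \ {e}} ω_f : C a circuit of M with e ∈ C }. (The 'red rule' computes the subdominant M-ultrametric.) -/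
open scoped Classical

variable {α : Type*}

section Aux

set_option linter.unusedSectionVars false
variable [Fintype α] {M : Matroid α} {C F B X : Set α} {x g f : α}

lemma wSum_eq_finset (ω : α → ℝ) (B : Set α) : wSum ω B = ∑ x ∈ B.toFinset, ω x := by
  rw [wSum, ← finsum_mem_coe_finset, Set.coe_toFinset]

lemma wSum_insert (ω : α → ℝ) {a : α} {s : Set α} (h : a ∉ s) :
    wSum ω (insert a s) = ω a + wSum ω s := by
  rw [wSum, wSum, finsum_mem_insert _ h (Set.toFinite s)]

lemma wSum_diff (ω : α → ℝ) {a : α} {s : Set α} (h : a ∈ s) :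
    wSum ω s = ω a + wSum ω (s \ {a}) := by
  have hs : s = insert a (s \ {a}) := by
    simp [Set.insert_diff_singleton, Set.insert_eq_of_mem h]
  conv_lhs => rw [hs]
  exact wSum_insert ω (by simp)

lemma IsCircuit.dep (hC : IsCircuit M C) : M.Dep C := hC.1

lemma IsCircuit.diff_indep_s5 (hC : IsCircuit M C) (hg : g ∈ C) : M.Indep (C \ {g}) := by
  by_contra h
  have hdep : M.Dep (C \ {g}) :=
    (M.dep_iff).2 ⟨h, Set.diff_subset.trans hC.dep.subset_ground⟩
  have := hC.2 hdep Set.diff_subset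
  exact (this hg).2 rfl

lemma IsCircuit.mem_closure_diff_s5 (hC : IsCircuit M C) (hg : g ∈ C) :
    g ∈ M.closure (C \ {g}) := by
  rw [(hC.diff_indep_s5 hg).mem_closure_iff_of_notMem (by simp)]
  have : insert g (C \ {g}) = C := by
    simp [Set.insert_diff_singleton, Set.insert_eq_of_mem hg]
  rw [this]; exact hC.dep

lemma exists_circuit_subset (hX : M.Dep X) : ∃ C, IsCircuit M C ∧ C ⊆ X := by
  have hfin : {Y : Set α | M.Dep Y ∧ Y ⊆ X}.Finite := Set.toFinite _
  obtain ⟨C, hC, hmin⟩ : ∃ C ∈ {Y : Set α | M.Dep Y ∧ Y ⊆ X},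
      ∀ Y ∈ {Y : Set α | M.Dep Y ∧ Y ⊆ X}, id Y ≤ id C → id C = id Y := by
    obtain ⟨C, hC⟩ := hfin.exists_minimal ⟨X, hX, le_refl X⟩
    exact ⟨C, hC.1, fun Y hY hYC => (hC.eq_of_le hY hYC).symm⟩
  refine ⟨C, ⟨hC.1, fun Y hY hYC => ?_⟩, hC.2⟩
  have := hmin Y ⟨hY, hYC.trans hC.2⟩ hYC
  exact this.le

lemma exists_circuit_of_mem_closure (hE : M.E = Set.univ) (hxF : x ∈ M.closure F)
    (hx : x ∉ F) : ∃ C, IsCircuit M C ∧ x ∈ C ∧ C ⊆ insert x F := by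
  obtain ⟨I, hI⟩ := M.exists_isBasis F (hE ▸ Set.subset_univ F)
  have hxI : x ∈ M.closure I := by rw [hI.closure_eq_closure]; exact hxF
  have hxnI : x ∉ I := fun h => hx (hI.subset h)
  have hdep : M.Dep (insert x I) := (hI.indep.mem_closure_iff_of_notMem hxnI).1 hxI
  obtain ⟨C, hC, hCsub⟩ := exists_circuit_subset hdep
  have hxC : x ∈ C := by
    by_contra h
    exact hC.dep.not_indep (hI.indep.subset (fun y hy =>
      (hCsub hy).resolve_left (fun he => h (he ▸ hy))))
  exact ⟨C, hC, hxC, hCsub.trans (Set.insert_subset_insert hI.subset)⟩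

/-- Bergman fan membership implies the max on each circuit is attained twice. -/
lemma two_max_of_BF (u : α → ℝ) (h1 : InBergmanFan M u)
    (hC : IsCircuit M C) (hx : x ∈ C) : ∃ f ∈ C \ {x}, u x ≤ u f := by
  obtain ⟨B, ⟨hB, hmin⟩, hxB⟩ := h1 x
  have hxcl : x ∉ M.closure (B \ {x}) :=
    (Matroid.indep_iff_forall_notMem_closure_diff hB.indep.subset_ground).1
      hB.indep hxB
  obtain ⟨f, hf, hfcl⟩ : ∃ f ∈ C \ {x}, f ∉ M.closure (B \ {x}) := by
    by_contra h
    push_neg at h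
    exact hxcl ((M.closure_subset_closure_of_subset_closure h)
      (hC.mem_closure_diff_s5 hx))
  have hfx : f ≠ x := hf.2
  have hfB : f ∉ B := fun hfB =>
    hfcl (M.subset_closure (B \ {x}) (Set.diff_subset.trans hB.subset_ground) ⟨hfB, hfx⟩)
  have hind : M.Indep (insert f (B \ {x})) := by
    rw [(hB.indep.subset Set.diff_subset).insert_indep_iff_of_notMem
      (fun h => hfB h.1)]
    exact ⟨hC.dep.subset_ground hf.1, hfcl⟩
  have hB' := hB.exchange_isBase_of_indep hfB hind
  have hw := hmin _ hB'
  rw [wSum_insert u (fun h => hfB h.1), wSum_diff u hxB] at hw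
  exact ⟨f, hf, by linarith⟩

/-- The two-max property on circuits implies Bergman fan membership. -/
lemma BF_of_two_max (hE : M.E = Set.univ) (u : α → ℝ)
    (htm : ∀ C, IsCircuit M C → ∀ x ∈ C, ∃ f ∈ C \ {x}, u x ≤ u f) :
    InBergmanFan M u := by
  obtain ⟨B, hB, hmin⟩ := Set.exists_min_image {B : Set α | M.IsBase B} (wSum u)
    (Set.toFinite _) M.exists_isBase
  intro x
  by_cases hxB : x ∈ B
  · exact ⟨B, ⟨hB, fun B' h => hmin B' h⟩, hxB⟩
  have hdep : M.Dep (insert x B) := hB.insert_dep ⟨by rw [hE]; trivial, hxB⟩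
  obtain ⟨C, hC, hCsub⟩ := exists_circuit_subset hdep
  have hxC : x ∈ C := by
    by_contra h
    exact hC.dep.not_indep (hB.indep.subset (fun y hy =>
      (hCsub hy).resolve_left (fun he => h (he ▸ hy))))
  obtain ⟨f, hf, hle⟩ := htm C hC x hxC
  have hfx : f ≠ x := hf.2
  have hfB : f ∈ B := ((hCsub hf.1).resolve_left hfx)
  have hxBf : x ∉ B \ {f} := fun h => hxB h.1
  have hind : M.Indep (insert x (B \ {f})) := by
    by_contra h
    have hxcl : x ∈ M.closure (B \ {f}) := by
      rw [(hB.indep.subset Set.diff_subset).mem_closure_iff_of_notMem hxBf]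
      exact (M.dep_iff).2 ⟨h, by rw [hE]; exact Set.subset_univ _⟩
    have hCsub' : C \ {f} ⊆ insert x (B \ {f}) := by
      intro y hy
      rcases hCsub hy.1 with h' | h'
      · exact h' ▸ Set.mem_insert _ _
      · exact Set.mem_insert_of_mem _ ⟨h', hy.2⟩
    have hfcl : f ∈ M.closure (insert x (B \ {f})) :=
      M.closure_subset_closure hCsub' (hC.mem_closure_diff_s5 hf.1)
    rw [Matroid.closure_insert_eq_of_mem_closure hxcl] at hfcl
    exact (Matroid.indep_iff_forall_notMem_closure_diff hB.indep.subset_ground).1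
      hB.indep hfB hfcl
  have hB' := hB.exchange_isBase_of_indep hxB hind
  refine ⟨insert x (B \ {f}), ⟨hB', fun B'' hB'' => ?_⟩, Set.mem_insert _ _⟩
  have h1 : wSum u (insert x (B \ {f})) = u x + wSum u (B \ {f}) := wSum_insert u hxBf
  have h2 : wSum u B = u f + wSum u (B \ {f}) := wSum_diff u hfB
  have := hmin B'' hB''
  linarith

end Aux

/-- **red rule.** For a loopless matroid M and ω ∈ ℝ^E, the subdominant
M-ultrametric satisfies, for every e,
ω^M_e = min of {ω_e} ∪ { max_{f ∈ C \ {e}} ω_f : C a circuit of M containing e }. -/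
theorem stmt5 [Fintype α] (M : Matroid α) (hE : M.E = Set.univ)
    (hloopless : ∀ e : α, M.Indep {e}) (ω usub : α → ℝ)
    (h1 : InBergmanFan M usub) (h2 : ∀ e, usub e ≤ ω e)
    (h3 : ∀ u : α → ℝ, InBergmanFan M u → (∀ e, u e ≤ ω e) → ∀ e, u e ≤ usub e) :
    ∀ e : α, usub e =
      sInf (insert (ω e)
        {r : ℝ | ∃ C : Set α, IsCircuit M C ∧ e ∈ C ∧ r = sSup (ω '' (C \ {e}))}) := by
  classical
  set Su : α → Set ℝ := fun x => insert (ω x)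
    {r : ℝ | ∃ C : Set α, IsCircuit M C ∧ x ∈ C ∧ r = sSup (ω '' (C \ {x}))} with hSu
  have hSfin : ∀ x, (Su x).Finite := by
    intro x
    apply Set.Finite.insert
    have hsub : {r : ℝ | ∃ C : Set α, IsCircuit M C ∧ x ∈ C ∧ r = sSup (ω '' (C \ {x}))}
        ⊆ (fun C : Set α => sSup (ω '' (C \ {x}))) '' Set.univ := by
      rintro r ⟨C, _, _, rfl⟩; exact ⟨C, trivial, rfl⟩
    exact ((Set.finite_univ).image _).subset hsub
  have hSne : ∀ x, (Su x).Nonempty := fun x => ⟨ω x, Set.mem_insert _ _⟩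
  set u : α → ℝ := fun x => sInf (Su x) with hu
  have hule : ∀ x, u x ≤ ω x := fun x => csInf_le (hSfin x).bddBelow (Set.mem_insert _ _)
  have huleC : ∀ x C, IsCircuit M C → x ∈ C → u x ≤ sSup (ω '' (C \ {x})) :=
    fun x C hC hxC => csInf_le (hSfin x).bddBelow (Set.mem_insert_of_mem _ ⟨C, hC, hxC, rfl⟩)
  have hCne : ∀ (C : Set α) (x : α), IsCircuit M C → x ∈ C → (C \ {x}).Nonempty := by
    intro C x hC hx
    rw [Set.nonempty_iff_ne_empty]
    intro h
    have hCx : C ⊆ {x} := Set.diff_eq_empty.1 h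
    have : C = {x} := (Set.subset_singleton_iff_eq.1 hCx).resolve_left
      (Set.nonempty_iff_ne_empty.1 ⟨x, hx⟩)
    exact hC.dep.not_indep (this ▸ hloopless x)
  have hsup_mem : ∀ (C : Set α) (x : α), IsCircuit M C → x ∈ C →
      ∃ f ∈ C \ {x}, sSup (ω '' (C \ {x})) = ω f := by
    intro C x hC hx
    have hne := hCne C x hC hx
    obtain ⟨f, hf, hval⟩ := (hne.image ω).csSup_mem ((Set.toFinite _).image ω)
    exact ⟨f, hf, hval.symm⟩
  have htm : ∀ C, IsCircuit M C → ∀ x ∈ C, ∃ f ∈ C \ {x}, u x ≤ u f := by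
    intro C hC x hx
    by_contra hcon
    push_neg at hcon
    set F : Set α := {f | ω f < u x} with hF
    have hxF : x ∉ F := fun h => absurd h (not_lt.2 (hule x))
    have hsubcl : C \ {x} ⊆ M.closure F := by
      intro g hg
      by_cases hg' : ω g < u x
      · exact M.subset_closure F (hE ▸ Set.subset_univ F) hg'
      · have hgu : u g < u x := hcon g hg
        have hmem : u g ∈ Su g := (hSne g).csInf_mem (hSfin g)
        rcases Set.mem_insert_iff.1 hmem with h' | ⟨C', hC', hgC', hval⟩
        · exact absurd (h' ▸ hgu) hg'
        · have hsub : C' \ {g} ⊆ F := by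
            intro h hh
            have hle : ω h ≤ sSup (ω '' (C' \ {g})) :=
              le_csSup ((Set.toFinite _).image ω).bddAbove ⟨h, hh, rfl⟩
            rw [← hval] at hle
            exact lt_of_le_of_lt hle hgu
          exact M.closure_subset_closure hsub (hC'.mem_closure_diff_s5 hgC')
    have hxcl : x ∈ M.closure F :=
      (M.closure_subset_closure_of_subset_closure hsubcl) (hC.mem_closure_diff_s5 hx)
    obtain ⟨C'', hC'', hxC'', hsub''⟩ := exists_circuit_of_mem_closure hE hxcl hxF
    have hux : u x ≤ sSup (ω '' (C'' \ {x})) := huleC x C'' hC'' hxC''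
    obtain ⟨f, hf, hfval⟩ := hsup_mem C'' x hC'' hxC''
    have hfF : f ∈ F := (hsub'' hf.1).resolve_left hf.2
    rw [hfval] at hux
    exact absurd hux (not_le.2 hfF)
  have hBF : InBergmanFan M u := BF_of_two_max hE u htm
  intro e
  refine le_antisymm ?_ ?_
  · apply le_csInf (hSne e)
    rintro r (rfl | ⟨C, hC, heC, rfl⟩)
    · exact h2 e
    · obtain ⟨f, hf, hle⟩ := two_max_of_BF usub h1 hC heC
      calc usub e ≤ usub f := hle
        _ ≤ ω f := h2 f
        _ ≤ sSup (ω '' (C \ {e})) :=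
            le_csSup ((Set.toFinite _).image ω).bddAbove ⟨f, hf, rfl⟩
  · exact h3 u hBF hule e
end

section
/- Let M be a loopless matroid on a finite nonempty ground set E, let ω ∈ ℝ^E, let ω^M be the subdominant M-ultrametric of ω, and set ε = (1/2) · max_{e ∈ E} (ω_e − ω^M_e). Then the vector ω^M + ε·𝟙 (adding ε to every coordinate) lies in B̃(M), and it is an ℓ∞-nearest M-ultrametric to ω: for every u ∈ B̃(M), max_{e ∈ E} |ω_e − (ω^M_e + ε)| ≤ max_{e ∈ E} |ω_e − u_e|, and moreover max_{e ∈ E} |ω_e − (ω^M_e + ε)| = ε. -/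
open scoped Classical

variable {α : Type*}

lemma wSum_add_const [Fintype α] (ω : α → ℝ) (c : ℝ) (B : Set α) :
    wSum (fun e => ω e + c) B = wSum ω B + B.ncard * c := by
  have h : B = ↑B.toFinset := by simp
  rw [wSum, wSum, h, finsum_mem_coe_finset, finsum_mem_coe_finset,
    Finset.sum_add_distrib, Finset.sum_const, Set.ncard_eq_toFinset_card']
  simp

lemma bergman_add_const [Fintype α] (M : Matroid α) (ω : α → ℝ) (c : ℝ)
    (h : InBergmanFan M ω) : InBergmanFan M (fun e => ω e + c) := by
  intro e
  obtain ⟨B, ⟨hB, hmin⟩, heB⟩ := h e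
  refine ⟨B, ⟨hB, fun B' hB' => ?_⟩, heB⟩
  rw [wSum_add_const, wSum_add_const, hB.ncard_eq_ncard_of_isBase hB']
  linarith [hmin B' hB']

/-- For a loopless matroid M on a finite nonempty ground set, ω ∈ ℝ^E,
the subdominant M-ultrametric ω^M, and ε = (1/2)·max_e (ω_e − ω^M_e): the shifted vector
ω^M + ε·𝟙 lies in the Bergman fan, it is an ℓ∞-nearest M-ultrametric to ω, and its
ℓ∞-distance to ω equals ε. -/
theorem stmt14 [Fintype α] [Nonempty α] (M : Matroid α) (hE : M.E = Set.univ)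
    (hloopless : ∀ e : α, M.Indep {e}) (ω usub : α → ℝ)
    (h1 : InBergmanFan M usub) (h2 : ∀ e, usub e ≤ ω e)
    (h3 : ∀ u : α → ℝ, InBergmanFan M u → (∀ e, u e ≤ ω e) → ∀ e, u e ≤ usub e)
    (ε : ℝ)
    (hε : ε = (1 / 2) * Finset.univ.sup' Finset.univ_nonempty (fun e : α => ω e - usub e)) :
    InBergmanFan M (fun e => usub e + ε) ∧
    (∀ u : α → ℝ, InBergmanFan M u →
      Finset.univ.sup' Finset.univ_nonempty (fun e : α => |ω e - (usub e + ε)|) ≤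
        Finset.univ.sup' Finset.univ_nonempty (fun e : α => |ω e - u e|)) ∧
    Finset.univ.sup' Finset.univ_nonempty (fun e : α => |ω e - (usub e + ε)|) = ε := by
  set s := Finset.univ.sup' Finset.univ_nonempty (fun e : α => ω e - usub e) with hs
  have hle : ∀ e : α, ω e - usub e ≤ s := fun e =>
    Finset.le_sup' (fun e : α => ω e - usub e) (Finset.mem_univ e)
  have hs0 : 0 ≤ s := le_trans (by linarith [h2 (Classical.arbitrary α)]) (hle (Classical.arbitrary α))
  have hε0 : 0 ≤ ε := by rw [hε]; linarith
  have habs : ∀ e : α, |ω e - (usub e + ε)| ≤ ε := by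
    intro e
    rw [abs_le]
    constructor
    · linarith [h2 e]
    · have := hle e; rw [hε] at *; linarith
  have heq : Finset.univ.sup' Finset.univ_nonempty (fun e : α => |ω e - (usub e + ε)|) = ε := by
    apply le_antisymm
    · exact Finset.sup'_le _ _ fun e _ => habs e
    · obtain ⟨e0, -, he0⟩ := Finset.exists_mem_eq_sup' Finset.univ_nonempty
        (fun e : α => ω e - usub e)
      have : |ω e0 - (usub e0 + ε)| = ε := by
        have h1' : ω e0 - usub e0 = s := he0.symm
        have : ω e0 - (usub e0 + ε) = ε := by rw [hε]; linarith
        rw [this, abs_of_nonneg hε0]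
      calc ε = |ω e0 - (usub e0 + ε)| := this.symm
        _ ≤ _ := Finset.le_sup' (fun e : α => |ω e - (usub e + ε)|) (Finset.mem_univ e0)
  refine ⟨bergman_add_const M usub ε h1, ?_, heq⟩
  intro u hu
  set d := Finset.univ.sup' Finset.univ_nonempty (fun e : α => |ω e - u e|) with hd
  have hdle : ∀ e : α, |ω e - u e| ≤ d := fun e =>
    Finset.le_sup' (fun e : α => |ω e - u e|) (Finset.mem_univ e)
  have hu' : InBergmanFan M (fun e => u e + (-d)) := bergman_add_const M u (-d) hu
  have hub : ∀ e, u e + (-d) ≤ ω e := by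
    intro e
    have := abs_le.mp (hdle e)
    linarith [this.1]
  have hsub := h3 _ hu' hub
  have hs2d : s ≤ 2 * d := by
    apply Finset.sup'_le
    intro e _
    have h5 := hsub e
    have h6 := (abs_le.mp (hdle e)).2
    linarith
  rw [heq, hε]
  linarith
end

section
/- Let X be a finite set with at least two elements and let ω be a dissimilarity map on X. Then the subdominant ultrametric ω_U (defined by path-minimax) is an ultrametric, satisfies ω_U(x,y) ≤ ω(x,y) for all x, y ∈ X, and is the greatest such ultrametric: every ultrametric δ on X with δ(x,y) ≤ ω(x,y) for all x, y satisfies δ(x,y) ≤ ω_U(x,y) for all x, y. -/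
open scoped Classical

variable {X : Type*}

/-- A dissimilarity map on X: a symmetric function vanishing on the diagonal. -/
def IsDissimilarity (δ : X → X → ℝ) : Prop :=
  (∀ x, δ x x = 0) ∧ ∀ x y, δ x y = δ y x

/-- An ultrametric on X: a dissimilarity map satisfying the strong triangle
inequality on pairwise distinct triples. -/
def IsUltrametricMap (δ : X → X → ℝ) : Prop :=
  IsDissimilarity δ ∧
    ∀ x y z : X, x ≠ y → y ≠ z → x ≠ z → δ x z ≤ max (δ x y) (δ y z)

/-- The subdominant ultrametric of ω: for x ≠ y, the minimum over all finite
sequences x = v₀, v₁, …, v_m = y (m ≥ 1) of the largest weight ω(v_{t-1}, v_t)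
of a step of the sequence. -/
noncomputable def subdomUltra (ω : X → X → ℝ) (x y : X) : ℝ :=
  if x = y then 0 else
    sInf {r : ℝ | ∃ (m : ℕ) (hm : 1 ≤ m) (v : ℕ → X), v 0 = x ∧ v m = y ∧
      r = (Finset.Icc 1 m).sup' (Finset.nonempty_Icc.mpr hm)
            (fun t => ω (v (t - 1)) (v t))}

def pathSet (ω : X → X → ℝ) (x y : X) : Set ℝ :=
  {r : ℝ | ∃ (m : ℕ) (hm : 1 ≤ m) (v : ℕ → X), v 0 = x ∧ v m = y ∧
      r = (Finset.Icc 1 m).sup' (Finset.nonempty_Icc.mpr hm)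
            (fun t => ω (v (t - 1)) (v t))}

lemma subdom_eq (ω : X → X → ℝ) (x y : X) :
    subdomUltra ω x y = if x = y then 0 else sInf (pathSet ω x y) := rfl

lemma omega_mem_pathSet (ω : X → X → ℝ) (x y : X) : ω x y ∈ pathSet ω x y := by
  refine ⟨1, le_refl 1, fun t => if t = 0 then x else y, by simp, by simp, ?_⟩
  simp [Finset.Icc_self]

lemma pathSet_nonempty (ω : X → X → ℝ) (x y : X) : (pathSet ω x y).Nonempty :=
  ⟨ω x y, omega_mem_pathSet ω x y⟩

lemma pathSet_bddBelow [Fintype X] [Nonempty X] (ω : X → X → ℝ) (x y : X) :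
    BddBelow (pathSet ω x y) := by
  have hne : (Finset.univ ×ˢ Finset.univ : Finset (X × X)).Nonempty := by
    simp [Finset.univ_nonempty]
  refine ⟨(Finset.univ ×ˢ Finset.univ).inf' hne (fun p => ω p.1 p.2), ?_⟩
  rintro r ⟨m, hm, v, h0, hmv, rfl⟩
  calc (Finset.univ ×ˢ Finset.univ).inf' hne (fun p => ω p.1 p.2)
      ≤ ω (v 0) (v 1) :=
        Finset.inf'_le (b := ((v 0, v 1) : X × X)) (fun p : X × X => ω p.1 p.2)
          (Finset.mem_product.mpr ⟨Finset.mem_univ (v 0), Finset.mem_univ (v 1)⟩)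
    _ ≤ _ := by
        have : (1 : ℕ) ∈ Finset.Icc 1 m := by simp [hm]
        exact Finset.le_sup' (fun t => ω (v (t - 1)) (v t)) this

lemma pathSet_symm_subset (ω : X → X → ℝ) (hω : ∀ a b, ω a b = ω b a) (x y : X) :
    pathSet ω y x ⊆ pathSet ω x y := by
  rintro r ⟨m, hm, v, h0, hmv, rfl⟩
  refine ⟨m, hm, fun t => v (m - t), by simpa using hmv, by simpa using h0, ?_⟩
  apply le_antisymm
  · apply Finset.sup'_le
    intro t ht
    rw [Finset.mem_Icc] at ht
    have hmem : m + 1 - t ∈ Finset.Icc 1 m := by rw [Finset.mem_Icc]; omega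
    have e3 : m - (m + 1 - t - 1) = t := by omega
    have e4 : m - (m + 1 - t) = t - 1 := by omega
    have htm := Finset.le_sup'
      (fun s => ω ((fun t => v (m - t)) (s - 1)) ((fun t => v (m - t)) s)) hmem
    simp only [e3, e4] at htm
    show ω (v (t - 1)) (v t) ≤ _
    rw [hω (v (t - 1)) (v t)]
    exact htm
  · apply Finset.sup'_le
    intro t ht
    rw [Finset.mem_Icc] at ht
    have hmem : m + 1 - t ∈ Finset.Icc 1 m := by rw [Finset.mem_Icc]; omega
    have e1 : m - (t - 1) = m + 1 - t := by omega
    have e2 : m + 1 - t - 1 = m - t := by omega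
    have htm := Finset.le_sup' (fun s => ω (v (s - 1)) (v s)) hmem
    simp only [e2] at htm
    show ω (v (m - (t - 1))) (v (m - t)) ≤ _
    rw [e1, hω (v (m + 1 - t)) (v (m - t))]
    exact htm

lemma pathSet_concat (ω : X → X → ℝ) (x y z : X) {r₁ r₂ : ℝ}
    (h₁ : r₁ ∈ pathSet ω x y) (h₂ : r₂ ∈ pathSet ω y z) :
    ∃ r ∈ pathSet ω x z, r ≤ max r₁ r₂ := by
  obtain ⟨m, hm, v, hv0, hvm, rfl⟩ := h₁
  obtain ⟨n, hn, w, hw0, hwn, rfl⟩ := h₂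
  set u : ℕ → X := fun t => if t ≤ m then v t else w (t - m) with hu
  have hmn : 1 ≤ m + n := by omega
  refine ⟨(Finset.Icc 1 (m + n)).sup' (Finset.nonempty_Icc.mpr hmn)
      (fun t => ω (u (t - 1)) (u t)),
    ⟨m + n, hmn, u, by simp only [hu]; rw [if_pos (Nat.zero_le m), hv0],
      by simp only [hu]
         rw [if_neg (by omega), show m + n - m = n from by omega, hwn], rfl⟩, ?_⟩
  apply Finset.sup'_le
  intro t ht
  rw [Finset.mem_Icc] at ht
  by_cases htm : t ≤ m
  · have h1 : u (t - 1) = v (t - 1) := by simp [hu]; omega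
    have h2 : u t = v t := by simp [hu, htm]
    rw [h1, h2]
    refine le_trans (Finset.le_sup' (fun t => ω (v (t - 1)) (v t))
      (by rw [Finset.mem_Icc]; omega)) (le_max_left _ _)
  · have h2 : u t = w (t - m) := by simp [hu]; omega
    have h1 : u (t - 1) = w (t - 1 - m) := by
      by_cases h : t - 1 ≤ m
      · have ht1 : t - 1 = m := by omega
        rw [ht1]
        simp [hu, hvm, ← hw0]
      · simp [hu, h]
    rw [h1, h2]
    have hmem : t - m ∈ Finset.Icc 1 n := by rw [Finset.mem_Icc]; omega
    have := Finset.le_sup' (fun s => ω (w (s - 1)) (w s)) hmem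
    rw [show t - 1 - m = t - m - 1 by omega]
    exact le_trans this (le_max_right _ _)

lemma ultra_path (δ : X → X → ℝ) (hδ : IsUltrametricMap δ) :
    ∀ m : ℕ, ∀ hm : 1 ≤ m, ∀ v : ℕ → X, v 0 ≠ v m →
      δ (v 0) (v m) ≤ (Finset.Icc 1 m).sup' (Finset.nonempty_Icc.mpr hm)
        (fun t => δ (v (t - 1)) (v t)) := by
  intro m
  induction m with
  | zero => intro hm; omega
  | succ m ih =>
    intro hm v hne
    by_cases hm1 : m = 0
    · subst hm1; simp
    have hm' : 1 ≤ m := by omega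
    have hsub : ∀ (f : ℕ → ℝ), (Finset.Icc 1 m).sup' (Finset.nonempty_Icc.mpr hm') f ≤
        (Finset.Icc 1 (m + 1)).sup' (Finset.nonempty_Icc.mpr hm) f := by
      intro f
      apply Finset.sup'_le
      intro t ht
      rw [Finset.mem_Icc] at ht
      exact Finset.le_sup' f (by rw [Finset.mem_Icc]; omega)
    have hlast : δ (v m) (v (m + 1)) ≤ (Finset.Icc 1 (m + 1)).sup'
        (Finset.nonempty_Icc.mpr hm) (fun t => δ (v (t - 1)) (v t)) := by
      have := Finset.le_sup' (fun t => δ (v (t - 1)) (v t))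
        (show m + 1 ∈ Finset.Icc 1 (m + 1) by rw [Finset.mem_Icc]; omega)
      exact this
    by_cases h0m : v 0 = v m
    · rw [h0m]; exact hlast
    by_cases hmm : v m = v (m + 1)
    · rw [← hmm]
      exact le_trans (ih hm' v h0m) (hsub _)
    · calc δ (v 0) (v (m + 1)) ≤ max (δ (v 0) (v m)) (δ (v m) (v (m + 1))) :=
            hδ.2 _ _ _ h0m hmm hne
        _ ≤ _ := max_le (le_trans (ih hm' v h0m) (hsub _)) hlast

/-- For a dissimilarity map ω on a finite set X with at least two
elements, the subdominant ultrametric ω_U is an ultrametric, lies below ω, and is the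
componentwise greatest ultrametric below ω. -/
theorem stmt15 [Fintype X] [Nontrivial X] (ω : X → X → ℝ) (hω : IsDissimilarity ω) :
    IsUltrametricMap (subdomUltra ω) ∧
    (∀ x y : X, subdomUltra ω x y ≤ ω x y) ∧
    ∀ δ : X → X → ℝ, IsUltrametricMap δ → (∀ x y : X, δ x y ≤ ω x y) →
      ∀ x y : X, δ x y ≤ subdomUltra ω x y := by
  have hle : ∀ x y : X, subdomUltra ω x y ≤ ω x y := by
    intro x y
    rw [subdom_eq]
    by_cases h : x = y
    · simp [h, (hω.1 y).ge]
    · simp only [h, if_false]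
      exact csInf_le (pathSet_bddBelow ω x y) (omega_mem_pathSet ω x y)
  have hsymm : ∀ x y : X, subdomUltra ω x y = subdomUltra ω y x := by
    intro x y
    rw [subdom_eq, subdom_eq]
    by_cases h : x = y
    · simp [h]
    · simp only [h, Ne.symm h, if_false]
      exact le_antisymm
        (le_csInf (pathSet_nonempty ω y x) fun r hr =>
          csInf_le (pathSet_bddBelow ω x y) (pathSet_symm_subset ω hω.2 x y hr))
        (le_csInf (pathSet_nonempty ω x y) fun r hr =>
          csInf_le (pathSet_bddBelow ω y x) (pathSet_symm_subset ω hω.2 y x hr))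
  refine ⟨⟨⟨fun x => by simp [subdom_eq], hsymm⟩, ?_⟩, hle, ?_⟩
  · intro x y z hxy hyz hxz
    apply le_of_forall_pos_le_add
    intro ε hε
    obtain ⟨r₁, hr₁, hr₁'⟩ := Real.lt_sInf_add_pos (pathSet_nonempty ω x y) hε
    obtain ⟨r₂, hr₂, hr₂'⟩ := Real.lt_sInf_add_pos (pathSet_nonempty ω y z) hε
    obtain ⟨r, hr, hrle⟩ := pathSet_concat ω x y z hr₁ hr₂
    rw [subdom_eq]
    simp only [hxz, if_false]
    calc sInf (pathSet ω x z) ≤ r := csInf_le (pathSet_bddBelow ω x z) hr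
      _ ≤ max r₁ r₂ := hrle
      _ ≤ max (sInf (pathSet ω x y) + ε) (sInf (pathSet ω y z) + ε) :=
          max_le_max hr₁'.le hr₂'.le
      _ = max (sInf (pathSet ω x y)) (sInf (pathSet ω y z)) + ε := by
          rw [max_add_add_right]
      _ = max (subdomUltra ω x y) (subdomUltra ω y z) + ε := by
          rw [subdom_eq, subdom_eq]; simp [hxy, hyz]
  · intro δ hδ hδω x y
    rw [subdom_eq]
    by_cases h : x = y
    · simp [h, (hδ.1.1 y).le]
    · simp only [h, if_false]
      apply le_csInf (pathSet_nonempty ω x y)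
      rintro r ⟨m, hm, v, hv0, hvm, rfl⟩
      by_cases hvv : v 0 = v m
      · rw [← hv0, ← hvm] at h; exact absurd hvv h
      calc δ x y = δ (v 0) (v m) := by rw [hv0, hvm]
        _ ≤ (Finset.Icc 1 m).sup' (Finset.nonempty_Icc.mpr hm)
              (fun t => δ (v (t - 1)) (v t)) := ultra_path δ hδ m hm v hvv
        _ ≤ _ := by
            apply Finset.sup'_le
            intro t ht
            exact le_trans (hδω _ _) (Finset.le_sup' (fun t => ω (v (t - 1)) (v t)) ht)
end
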